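/- Under the stochastic Horner model with x ≠ 0, the sequence Y_1, …, Y_{2n} defined by Y_i = Z_i / x^{⌊(i+1)/2⌋} is a martingale with respect to the filtration F_i = σ(δ_1, …, δ_i): each Y_i is F_i-measurable, integrable, and E[Y_i | F_{i−1}] = Y_{i−1} almost surely for all 1 ≤ i ≤ 2n. -/

import Mathlib

open MeasureTheory ProbabilityTheory

private theorem integrable_of_abs_le_aux {Ω : Type*} {mΩ : MeasurableSpace Ω} {μ : Measure Ω}
    [IsFiniteMeasure μ] {f : Ω → ℝ} (hf : AEStronglyMeasurable f μ) {C : ℝ}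
    (h : ∀ᵐ ω ∂μ, |f ω| ≤ C) : Integrable f μ :=
  Integrable.mono' (integrable_const C) hf (by simpa [Real.norm_eq_abs] using h)

private theorem abs_div_le_div_aux {A C p : ℝ} (h : |A| ≤ C) : |A / p| ≤ C / |p| := by
  rw [abs_div, div_eq_mul_inv, div_eq_mul_inv]
  exact mul_le_mul_of_nonneg_right h (inv_nonneg.2 (abs_nonneg p))

private theorem horner_key {Ω : Type*} [m0 : MeasurableSpace Ω] {μ : Measure Ω}
    [IsProbabilityMeasure μ] {m : MeasurableSpace Ω} (hm : m ≤ m0)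
    {Yc Yp W g : Ω → ℝ}
    (hYp : Measurable[m] Yp) {Cp : ℝ} (hYpb : ∀ᵐ ω ∂μ, |Yp ω| ≤ Cp)
    (hW : Measurable[m] W) {Cw : ℝ} (hWb : ∀ᵐ ω ∂μ, |W ω| ≤ Cw)
    (hg : Measurable[m0] g) {Cg : ℝ} (hgb : ∀ᵐ ω ∂μ, |g ω| ≤ Cg)
    (hg0 : μ[g | m] =ᵐ[μ] fun _ => 0)
    (hdec : ∀ ω, Yc ω = Yp ω + W ω * g ω) :
    μ[Yc | m] =ᵐ[μ] Yp := by
  have hYpa : Measurable[m0] Yp := hYp.mono hm le_rfl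
  have hWa : Measurable[m0] W := hW.mono hm le_rfl
  have hYpInt : Integrable Yp μ :=
    integrable_of_abs_le_aux hYpa.aestronglyMeasurable hYpb
  have hgInt : Integrable g μ :=
    integrable_of_abs_le_aux hg.aestronglyMeasurable hgb
  have hWgInt : Integrable (W * g) μ := by
    refine integrable_of_abs_le_aux
      (hWa.mul hg).aestronglyMeasurable (C := Cw * Cg) ?_
    filter_upwards [hWb, hgb] with ω h1 h2
    calc |(W * g) ω| = |W ω| * |g ω| := abs_mul _ _
      _ ≤ Cw * Cg := mul_le_mul h1 h2 (abs_nonneg _) ((abs_nonneg _).trans h1)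
  have hYceq : Yc = Yp + W * g := funext fun ω => hdec ω
  have hadd : μ[Yc | m] =ᵐ[μ] μ[Yp | m] + μ[W * g | m] := by
    rw [hYceq]; exact condExp_add hYpInt hWgInt m
  have h1 : μ[Yp | m] = Yp :=
    condExp_of_stronglyMeasurable hm hYp.stronglyMeasurable hYpInt
  have h2 : μ[W * g | m] =ᵐ[μ] W * μ[g | m] :=
    condExp_mul_of_stronglyMeasurable_left hW.stronglyMeasurable hWgInt hgInt
  filter_upwards [hadd, h2, hg0] with ω hω h2ω hg0ω
  rw [hω, Pi.add_apply, h1, h2ω, Pi.mul_apply, hg0ω, mul_zero, add_zero]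

/-- Under the stochastic Horner model with `x ≠ 0`, the sequence
`Y_i = Z_i / x^{⌊(i+1)/2⌋}` (with `Z_i = r̂_i − r_i`) is a martingale with
respect to the filtration `F_i = σ(δ_1, …, δ_i)`: each `Y_i` is
`F_i`-measurable, integrable, and `E[Y_i | F_{i−1}] = Y_{i−1}` a.s. -/
theorem stmt_10 {Ω : Type*} [MeasurableSpace Ω] {μ : Measure Ω}
    [IsProbabilityMeasure μ]
    (n : ℕ) (hn : 1 ≤ n) (x : ℝ) (hx : x ≠ 0) (a : ℕ → ℝ) (u : ℝ) (hu : 0 < u)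
    (δ : ℕ → Ω → ℝ) (hδm : ∀ k, Measurable (δ k))
    (hδb : ∀ k, 1 ≤ k → k ≤ 2 * n → ∀ᵐ ω ∂μ, |δ k ω| ≤ u)
    (F : ℕ → MeasurableSpace Ω)
    (hF : ∀ i, F i = ⨆ j ∈ Finset.Icc 1 i,
      MeasurableSpace.comap (δ j) Real.measurableSpace)
    (hmi : ∀ k, 1 ≤ k → k ≤ 2 * n → μ[δ k | F (k - 1)] =ᵐ[μ] fun _ => 0)
    (rhat : ℕ → Ω → ℝ) (r : ℕ → ℝ)
    (h0 : ∀ ω, rhat 0 ω = a n)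
    (hodd : ∀ k, 1 ≤ k → k ≤ n → ∀ ω,
      rhat (2 * k - 1) ω = rhat (2 * k - 2) ω * x * (1 + δ (2 * k - 1) ω))
    (heven : ∀ k, 1 ≤ k → k ≤ n → ∀ ω,
      rhat (2 * k) ω = (rhat (2 * k - 1) ω + a (n - k)) * (1 + δ (2 * k) ω))
    (hr0 : r 0 = a n)
    (hrodd : ∀ k, 1 ≤ k → k ≤ n → r (2 * k - 1) = r (2 * k - 2) * x)
    (hreven : ∀ k, 1 ≤ k → k ≤ n → r (2 * k) = r (2 * k - 1) + a (n - k))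
    (Y : ℕ → Ω → ℝ)
    (hY : ∀ i ω, Y i ω = (rhat i ω - r i) / x ^ ((i + 1) / 2)) :
    ∀ i, 1 ≤ i → i ≤ 2 * n →
      Measurable[F i] (Y i) ∧ Integrable (Y i) μ ∧
        μ[Y i | F (i - 1)] =ᵐ[μ] Y (i - 1) := by
  have hu0 : (0:ℝ) ≤ u := hu.le
  -- Basic facts about the filtration
  have hFle : ∀ i, F i ≤ ‹MeasurableSpace Ω› := by
    intro i; rw [hF]
    exact iSup₂_le fun j _ => (hδm j).comap_le
  have hFmono : ∀ {i j : ℕ}, i ≤ j → F i ≤ F j := by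
    intro i j hij; rw [hF, hF]
    refine iSup₂_le fun l hl => ?_
    exact le_iSup₂ (f := fun l _ => MeasurableSpace.comap (δ l) Real.measurableSpace) l
      (Finset.Icc_subset_Icc le_rfl hij hl)
  have hδF : ∀ k, 1 ≤ k → Measurable[F k] (δ k) := by
    intro k hk
    have hle : MeasurableSpace.comap (δ k) Real.measurableSpace ≤ F k := by
      rw [hF]
      exact le_iSup₂ (f := fun l _ => MeasurableSpace.comap (δ l) Real.measurableSpace) k
        (Finset.mem_Icc.mpr ⟨hk, le_rfl⟩)
    exact fun s hs => hle _ ⟨s, hs, rfl⟩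
  -- Measurability and a.s. boundedness of `rhat i` w.r.t. `F i`
  have hQ : ∀ i, i ≤ 2 * n →
      Measurable[F i] (rhat i) ∧ ∃ C, 0 ≤ C ∧ ∀ᵐ ω ∂μ, |rhat i ω| ≤ C := by
    intro i
    induction i using Nat.strong_induction_on with
    | _ i ih =>
      intro hi
      rcases Nat.eq_zero_or_pos i with rfl | hpos
      · have h0' : rhat 0 = fun _ => a n := funext h0
        refine ⟨by rw [h0']; exact measurable_const, |a n|, abs_nonneg _, ?_⟩
        exact .of_forall fun ω => by rw [h0 ω]
      · rcases Nat.even_or_odd i with ⟨k, hk⟩ | ⟨k, hk⟩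
        · have hik : i = 2 * k := by omega
          subst hik
          have hk1 : 1 ≤ k := by omega
          have hkn : k ≤ n := by omega
          obtain ⟨hpm, C, hC0, hCb⟩ := ih (2 * k - 1) (by omega) (by omega)
          have hre : rhat (2 * k) =
              fun ω => (rhat (2 * k - 1) ω + a (n - k)) * (1 + δ (2 * k) ω) :=
            funext (heven k hk1 hkn)
          constructor
          · rw [hre]
            exact ((hpm.mono (hFmono (by omega)) le_rfl).add_const _).mul
              ((hδF (2 * k) (by omega)).const_add 1)
          · refine ⟨(C + |a (n - k)|) * (1 + u), by positivity, ?_⟩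
            filter_upwards [hCb, hδb (2 * k) (by omega) (by omega)] with ω h1 h2
            rw [heven k hk1 hkn ω]
            calc |(rhat (2 * k - 1) ω + a (n - k)) * (1 + δ (2 * k) ω)|
                = |rhat (2 * k - 1) ω + a (n - k)| * |1 + δ (2 * k) ω| := abs_mul _ _
              _ ≤ (C + |a (n - k)|) * (1 + u) := by
                  refine mul_le_mul ?_ ?_ (abs_nonneg _) (by positivity)
                  · exact (abs_add_le _ _).trans (by gcongr)
                  · exact (abs_add_le _ _).trans (by simp; linarith [abs_le.mp (abs_le_abs h2 (by linarith [abs_nonneg (δ (2*k) ω)]))])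
        · have hik : i = 2 * (k + 1) - 1 := by omega
          subst hik
          have hk1 : 1 ≤ k + 1 := by omega
          have hkn : k + 1 ≤ n := by omega
          have h2 : 2 * (k + 1) - 2 = 2 * k := by omega
          obtain ⟨hpm, C, hC0, hCb⟩ := ih (2 * k) (by omega) (by omega)
          have hre : rhat (2 * (k + 1) - 1) =
              fun ω => rhat (2 * k) ω * x * (1 + δ (2 * (k + 1) - 1) ω) := by
            funext ω; rw [hodd (k + 1) hk1 hkn ω, h2]
          constructor
          · rw [hre]
            exact ((hpm.mono (hFmono (by omega)) le_rfl).mul_const x).mul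
              ((hδF (2 * (k + 1) - 1) (by omega)).const_add 1)
          · refine ⟨C * |x| * (1 + u), by positivity, ?_⟩
            filter_upwards [hCb, hδb (2 * (k + 1) - 1) (by omega) (by omega)] with ω h1 hd
            rw [hre]
            calc |rhat (2 * k) ω * x * (1 + δ (2 * (k + 1) - 1) ω)|
                = |rhat (2 * k) ω| * |x| * |1 + δ (2 * (k + 1) - 1) ω| := by
                  rw [abs_mul, abs_mul]
              _ ≤ C * |x| * (1 + u) := by
                  refine mul_le_mul (by gcongr) ?_ (abs_nonneg _) (by positivity)
                  exact (abs_add_le _ _).trans (by simp; linarith [abs_le.mp hd])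
  -- Measurability and a.s. boundedness of `Y i` w.r.t. `F i`
  have hYfacts : ∀ i, i ≤ 2 * n →
      Measurable[F i] (Y i) ∧ ∃ C, ∀ᵐ ω ∂μ, |Y i ω| ≤ C := by
    intro i hi
    obtain ⟨hm', C, hC0, hCb⟩ := hQ i hi
    have hYe : Y i = fun ω => (rhat i ω - r i) / x ^ ((i + 1) / 2) :=
      funext fun ω => hY i ω
    have hxe : (0:ℝ) < |x ^ ((i + 1) / 2)| := abs_pos.mpr (pow_ne_zero _ hx)
    constructor
    · rw [hYe]; exact (hm'.sub_const _).div_const _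
    · refine ⟨(C + |r i|) / |x ^ ((i + 1) / 2)|, ?_⟩
      filter_upwards [hCb] with ω hω
      rw [hY]
      refine abs_div_le_div_aux ?_
      calc |rhat i ω - r i| ≤ |rhat i ω| + |r i| := by
            simpa [Real.norm_eq_abs] using norm_sub_le (rhat i ω) (r i)
        _ ≤ C + |r i| := by gcongr
  intro i hi1 hi2
  obtain ⟨hYim, CY, hYib⟩ := hYfacts i hi2
  refine ⟨hYim, integrable_of_abs_le_aux ((hYim.mono (hFle i) le_rfl).aestronglyMeasurable) hYib, ?_⟩
  rcases Nat.even_or_odd i with ⟨k, hk⟩ | ⟨k, hk⟩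
  · -- even: i = 2k
    have hik : i = 2 * k := by omega
    subst hik
    have hk1 : 1 ≤ k := by omega
    have hkn : k ≤ n := by omega
    obtain ⟨hQm, Cq, hCq0, hCqb⟩ := hQ (2 * k - 1) (by omega)
    obtain ⟨hYm, Cy, hYb⟩ := hYfacts (2 * k - 1) (by omega)
    have hxk : (0:ℝ) < |x ^ k| := abs_pos.mpr (pow_ne_zero _ hx)
    refine horner_key (hFle _) hYm hYb
      (W := fun ω => (rhat (2 * k - 1) ω + a (n - k)) / x ^ k)
      ((hQm.add_const _).div_const _) (Cw := (Cq + |a (n - k)|) / |x ^ k|) ?_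
      (hδm _) (hδb (2 * k) (by omega) (by omega)) (hmi (2 * k) (by omega) (by omega)) ?_
    · filter_upwards [hCqb] with ω hω
      exact abs_div_le_div_aux ((abs_add_le _ _).trans (by gcongr))
    · intro ω
      have e1 : (2 * k + 1) / 2 = k := by omega
      have e2 : (2 * k - 1 + 1) / 2 = k := by omega
      simp only [hY]
      rw [heven k hk1 hkn ω, hreven k hk1 hkn, e1, e2]
      field_simp
      ring
  · -- odd: i = 2(k+1) - 1
    have hik : i = 2 * (k + 1) - 1 := by omega
    subst hik
    have hk1 : 1 ≤ k + 1 := by omega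
    have hkn : k + 1 ≤ n := by omega
    have hsub : 2 * (k + 1) - 1 - 1 = 2 * k := by omega
    have h2 : 2 * (k + 1) - 2 = 2 * k := by omega
    rw [hsub]
    obtain ⟨hQm, Cq, hCq0, hCqb⟩ := hQ (2 * k) (by omega)
    obtain ⟨hYm, Cy, hYb⟩ := hYfacts (2 * k) (by omega)
    have hxk : (0:ℝ) < |x ^ k| := abs_pos.mpr (pow_ne_zero _ hx)
    have hg0 := hmi (2 * (k + 1) - 1) (by omega) (by omega)
    rw [hsub] at hg0
    refine horner_key (hFle _) hYm hYb
      (W := fun ω => rhat (2 * k) ω / x ^ k)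
      (hQm.div_const _) (Cw := Cq / |x ^ k|) ?_
      (hδm _) (hδb (2 * (k + 1) - 1) (by omega) (by omega)) hg0 ?_
    · filter_upwards [hCqb] with ω hω
      exact abs_div_le_div_aux hω
    · intro ω
      have e1 : (2 * (k + 1) - 1 + 1) / 2 = k + 1 := by omega
      have e2 : (2 * k + 1) / 2 = k := by omega
      simp only [hY]
      rw [hodd (k + 1) hk1 hkn ω, hrodd (k + 1) hk1 hkn, h2, e1, e2, pow_succ]
      field_simp
      ring
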